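/- A positive integer n > 1 is prime if and only if the sum over i from 1 to n - 1 of (C(n, i) mod n) equals 0. -/

import Mathlib

lemma not_dvd_choose_sub_one {p m : ℕ} (hp : p.Prime) (hm : 0 < m) :
    ¬ p ∣ (p * m - 1).choose (p - 1) := by
  haveI : Fact p.Prime := ⟨hp⟩
  have hp2 : 2 ≤ p := hp.two_le
  have h1 : 1 ≤ p * m := Nat.one_le_iff_ne_zero.mpr
    (Nat.mul_ne_zero hp.pos.ne' hm.ne')
  have hmod : (p * m - 1) % p = p - 1 := by
    obtain ⟨k, rfl⟩ : ∃ k, m = k + 1 := ⟨m - 1, by omega⟩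
    have heq : p * (k + 1) - 1 = p * k + (p - 1) := by
      rw [Nat.mul_succ]; omega
    have hk1 : k + 1 - 1 = k := rfl
    rw [heq, hk1] at *
    rw [heq, Nat.mul_add_mod, Nat.mod_eq_of_lt (by omega)]
  have hdiv : (p - 1) / p = 0 := Nat.div_eq_of_lt (by omega)
  have hmodk : (p - 1) % p = p - 1 := Nat.mod_eq_of_lt (by omega)
  have h := Choose.choose_modEq_choose_mod_mul_choose_div
    (n := p * m - 1) (k := p - 1) (p := p)
  rw [hmod, hmodk, hdiv, Nat.choose_self, Nat.choose_zero_right] at h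
  rw [show ((1:ℕ):ℤ) * ((1:ℕ):ℤ) = 1 by norm_num] at h
  intro hcontra
  have h0 : ((p * m - 1).choose (p - 1) : ℤ) ≡ 0 [ZMOD p] :=
    (Int.modEq_zero_iff_dvd).mpr (Int.natCast_dvd_natCast.mpr hcontra)
  have : (p : ℤ) ∣ 1 := (Int.modEq_zero_iff_dvd).mp (h.symm.trans h0)
  have := Int.le_of_dvd one_pos this
  omega

theorem prime_iff_sum_binom_mod_eq_zero (n : ℕ) (hn : 1 < n) :
    n.Prime ↔ ∑ i ∈ Finset.Icc 1 (n - 1), (n.choose i % n) = 0 := by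
  constructor
  · intro hp
    apply Finset.sum_eq_zero
    intro i hi
    rw [Finset.mem_Icc] at hi
    have hd : n ∣ n.choose i := hp.dvd_choose_self (show i ≠ 0 by omega) (by omega)
    exact Nat.mod_eq_zero_of_dvd hd
  · intro h
    by_contra hnp
    set p := n.minFac with hpdef
    have hp : p.Prime := Nat.minFac_prime (by omega)
    have hpd : p ∣ n := Nat.minFac_dvd n
    have hpn : p < n := by
      rcases lt_or_eq_of_le (Nat.le_of_dvd (by omega) hpd) with h' | h'
      · exact h'
      · exact absurd (h' ▸ hp) hnp
    have hall := (Finset.sum_eq_zero_iff).mp h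
    have hterm : n.choose p % n = 0 := hall p (Finset.mem_Icc.mpr ⟨hp.one_lt.le, by omega⟩)
    have hdvd : n ∣ n.choose p := Nat.dvd_of_mod_eq_zero hterm
    -- identity: n * C(n-1, p-1) = C(n, p) * p
    have hid : n * (n - 1).choose (p - 1) = n.choose p * p := by
      have := Nat.add_one_mul_choose_eq (n - 1) (p - 1)
      have e1 : n - 1 + 1 = n := by omega
      have hp1 := hp.pos
      have e2 : p - 1 + 1 = p := by omega
      rwa [e1, e2] at this
    obtain ⟨c, hc⟩ := hdvd
    have hpc : (n - 1).choose (p - 1) = c * p := by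
      have : n * (n - 1).choose (p - 1) = n * (c * p) := by
        rw [hid, hc]; ring
      exact Nat.eq_of_mul_eq_mul_left (by omega) this
    have hm : 0 < n / p := Nat.div_pos (Nat.le_of_dvd (by omega) hpd) hp.pos
    have hnpm : p * (n / p) = n := Nat.mul_div_cancel' hpd
    exact not_dvd_choose_sub_one hp hm (by rw [hnpm, hpc]; exact dvd_mul_left p c)
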